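/- Define the set D of down-integers to consist of all n ≥ 2 whose unique decomposition n = a·f_t + b·f_{t-1} (1 ≤ a ≤ b ≤ f_t, t ≥ 2) has t even, and let d_1 < d_2 < ... be its elements in increasing order. Then {d_{k+1} − d_k : k ≥ 1} = {1, 2, 3, 5}. -/
import Mathlib

open Nat

/-- The set of down-integers: those `n ≥ 2` whose unique decomposition
`n = a·f_t + b·f_{t-1}` with `1 ≤ a ≤ b ≤ f_t`, `t ≥ 2`, has `t` even. -/
def downSet : Set ℕ :=
  {n | 2 ≤ n ∧ ∃ a b t : ℕ, 2 ≤ t ∧ Even t ∧ 1 ≤ a ∧ a ≤ b ∧ b ≤ Nat.fib t ∧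
    n = a * Nat.fib t + b * Nat.fib (t - 1)}

namespace DownAux

lemma fibZ (n : ℕ) : (fib (n+2) : ℤ) = fib n + fib (n+1) := by
  rw [fib_add_two]; push_cast; ring

lemma cassZ : ∀ k : ℕ, (fib (k+1) : ℤ) * fib (k+1) - fib k * fib (k+2) = (-1)^k := by
  intro k
  induction k with
  | zero => norm_num
  | succ k ih =>
    have h1 := fibZ k
    have h2 := fibZ (k+1)
    have h3 : (-1 : ℤ)^(k+1) = -(-1)^k := by ring
    rw [show k+1+1 = k+2 by ring, show k+1+2 = k+3 by ring] at *
    rw [h3, ← ih]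
    linear_combination (fib (k+2):ℤ) * h1 - (fib (k+1):ℤ) * h2

lemma cassE (v : ℕ) (hv : Even v) :
    (fib (v+1) : ℤ) * fib (v+1) - fib v * fib (v+2) = 1 := by
  rw [cassZ v, hv.neg_one_pow]

section identities
variable (v : ℕ)

lemma idA (hv : Even v) : (fib (v+3) : ℤ) * fib (v+6) = fib (v+4) * fib (v+5) + 1 := by
  have e2 := fibZ v; have e3 := fibZ (v+1); have e4 := fibZ (v+2)
  have e5 := fibZ (v+3); have e6 := fibZ (v+4)
  have hc := cassE v hv
  rw [show v+1+2 = v+3 by ring] at e3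
  rw [show v+2+2 = v+4 by ring] at e4
  rw [show v+3+2 = v+5 by ring] at e5
  rw [show v+4+2 = v+6 by ring] at e6
  nlinarith [hc, e2, e3, e4, e5, e6]

lemma idC (hv : Even v) : (fib (v+1) : ℤ) * fib (v+6) = fib (v+2) * fib (v+5) + 3 := by
  have e2 := fibZ v; have e3 := fibZ (v+1); have e4 := fibZ (v+2)
  have e5 := fibZ (v+3); have e6 := fibZ (v+4)
  have hc := cassE v hv
  rw [show v+1+2 = v+3 by ring] at e3
  rw [show v+2+2 = v+4 by ring] at e4
  rw [show v+3+2 = v+5 by ring] at e5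
  rw [show v+4+2 = v+6 by ring] at e6
  nlinarith [hc, e2, e3, e4, e5, e6]

lemma idB (hv : Even v) : (fib (v+3) : ℤ) * fib (v+5) = fib (v+2) * fib (v+6) + 2 := by
  have e2 := fibZ v; have e3 := fibZ (v+1); have e4 := fibZ (v+2)
  have e5 := fibZ (v+3); have e6 := fibZ (v+4)
  have hc := cassE v hv
  rw [show v+1+2 = v+3 by ring] at e3
  rw [show v+2+2 = v+4 by ring] at e4
  rw [show v+3+2 = v+5 by ring] at e5
  rw [show v+4+2 = v+6 by ring] at e6
  nlinarith [hc, e2, e3, e4, e5, e6]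

lemma idE (hv : Even v) : (fib (v+1) : ℤ) * fib (v+5) = fib v * fib (v+6) + 5 := by
  have e2 := fibZ v; have e3 := fibZ (v+1); have e4 := fibZ (v+2)
  have e5 := fibZ (v+3); have e6 := fibZ (v+4)
  have hc := cassE v hv
  rw [show v+1+2 = v+3 by ring] at e3
  rw [show v+2+2 = v+4 by ring] at e4
  rw [show v+3+2 = v+5 by ring] at e5
  rw [show v+4+2 = v+6 by ring] at e6
  nlinarith [hc, e2, e3, e4, e5, e6]

lemma idD (hv : Even v) : (fib (v+3) : ℤ) * fib (v+8) = fib (v+4) * fib (v+7) + 3 := by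
  have e2 := fibZ v; have e3 := fibZ (v+1); have e4 := fibZ (v+2)
  have e5 := fibZ (v+3); have e6 := fibZ (v+4); have e7 := fibZ (v+5)
  have e8 := fibZ (v+6)
  have hc := cassE v hv
  rw [show v+1+2 = v+3 by ring] at e3
  rw [show v+2+2 = v+4 by ring] at e4
  rw [show v+3+2 = v+5 by ring] at e5
  rw [show v+4+2 = v+6 by ring] at e6
  rw [show v+5+2 = v+7 by ring] at e7
  rw [show v+6+2 = v+8 by ring] at e8
  nlinarith [hc, e2, e3, e4, e5, e6, e7, e8]

end identities

/-- descent/translation step -/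
lemma tdown (k a b : ℕ) :
    a * fib (k+4) + b * fib (k+3) = (2*a+b) * fib (k+2) + (a+b) * fib (k+1) := by
  rw [show fib (k+4) = fib (k+2) + fib (k+3) from fib_add_two,
      show fib (k+3) = fib (k+1) + fib (k+2) from fib_add_two]
  ring

lemma mem_downSet_of (t a b n : ℕ) (ht2 : 2 ≤ t) (hte : Even t) (ha : 1 ≤ a) (hab : a ≤ b)
    (hb : b ≤ fib t) (hn : n = a * fib t + b * fib (t-1)) : n ∈ downSet := by
  have h1 : 1 ≤ fib t := fib_pos.mpr (by omega)
  have h2 : 1 ≤ fib (t-1) := fib_pos.mpr (by omega)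
  have hb1 : 1 ≤ b := le_trans ha hab
  refine ⟨?_, a, b, t, ht2, hte, ha, hab, hb, hn⟩
  have := Nat.mul_le_mul ha h1
  have := Nat.mul_le_mul hb1 h2
  omega

end DownAux

namespace DownAux2
open DownAux

lemma reg_succ : ∀ v : ℕ, Even v → ∀ a b : ℕ, 1 ≤ a → 1 ≤ b → a ≤ b + fib (v+2) →
    b ≤ fib (v+6) →
    ∃ j, (j = 1 ∨ j = 3 ∨ j = 5) ∧ (a * fib (v+6) + b * fib (v+5) + j) ∈ downSet := by
  intro v
  induction v using Nat.strong_induction_on with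
  | _ v ih =>
  intro hv a b ha hb hreg hbb
  have hg2 : fib (v+2) = fib v + fib (v+1) := fib_add_two
  have hg3 : fib (v+3) = fib (v+1) + fib (v+2) := fib_add_two
  have hg4 : fib (v+4) = fib (v+2) + fib (v+3) := fib_add_two
  have hg5 : fib (v+5) = fib (v+3) + fib (v+4) := fib_add_two
  have hg6 : fib (v+6) = fib (v+4) + fib (v+5) := fib_add_two
  have hg7 : fib (v+7) = fib (v+5) + fib (v+6) := fib_add_two
  have hg8 : fib (v+8) = fib (v+6) + fib (v+7) := fib_add_two
  have hmono : fib v ≤ fib (v+1) := fib_mono (by omega)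
  have hy : 1 ≤ fib (v+1) := fib_pos.mpr (by omega)
  have hv6 : Even (v+6) := by rcases hv with ⟨r, rfl⟩; exact ⟨r+3, by ring⟩
  have hv8 : Even (v+8) := by rcases hv with ⟨r, rfl⟩; exact ⟨r+4, by ring⟩
  by_cases hA : a + fib (v+5) ≤ b
  · -- gap 1, in class
    refine ⟨1, by omega, mem_downSet_of (v+6) (a + fib (v+3)) (b - fib (v+4)) _
      (by omega) hv6 (by omega) (by omega) (by omega) ?_⟩
    have hid := idA v hv
    have hb4 : fib (v+4) ≤ b := by omega
    zify [hb4]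
    push_cast
    linear_combination -hid
  · by_cases hC : a + fib (v+3) ≤ b
    · -- gap 3, in class
      refine ⟨3, by omega, mem_downSet_of (v+6) (a + fib (v+1)) (b - fib (v+2)) _
        (by omega) hv6 (by omega) (by omega) (by omega) ?_⟩
      have hid := idC v hv
      have hb2 : fib (v+2) ≤ b := by omega
      zify [hb2]
      push_cast
      linear_combination -hid
    · by_cases hD : 2*a + fib (v+5) ≤ 3*b
      · -- gap 3, level v+8
        refine ⟨3, by omega, mem_downSet_of (v+8) (a + fib (v+3) - b) (2*b - (a + fib (v+4))) _
          (by omega) hv8 (by omega) (by omega) (by omega) ?_⟩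
        have hid := idD v hv
        have h1 : b ≤ a + fib (v+3) := by omega
        have h2 : a + fib (v+4) ≤ 2*b := by omega
        have z7 : (fib (v+7) : ℤ) = fib (v+5) + fib (v+6) := by push_cast [hg7]; ring
        have z8 : (fib (v+8) : ℤ) = fib (v+6) + fib (v+7) := by push_cast [hg8]; ring
        zify [h1, h2]
        push_cast
        linear_combination -hid + ((b:ℤ) - a) * z8 - (b:ℤ) * z7
      · by_cases hE : fib v + 1 ≤ a
        · -- gap 5, in class
          refine ⟨5, by omega, mem_downSet_of (v+6) (a - fib v) (b + fib (v+1)) _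
            (by omega) hv6 (by omega) (by omega) (by omega) ?_⟩
          have hid := idE v hv
          have h1 : fib v ≤ a := by omega
          zify [h1]
          push_cast
          linear_combination -hid
        · -- descend
          have hv2 : 2 ≤ v := by
            rcases hv with ⟨r, rfl⟩
            rcases r with _ | r
            · simp at hE; omega
            · omega
          have hcond : a ≤ fib v := by omega
          have hb' : a + b ≤ fib (v+4) := by omega
          obtain ⟨w, rfl⟩ : ∃ w, v = w + 2 := ⟨v - 2, by omega⟩
          have hvw : Even w := by rcases hv with ⟨r, hr⟩; exact ⟨r-1, by omega⟩
          rw [show w+2+4 = w+6 by ring] at hb'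
          obtain ⟨j, hj, hmem⟩ := ih w (by omega) hvw (2*a+b) (a+b) (by omega) (by omega)
            (by omega) hb'
          refine ⟨j, hj, ?_⟩
          have hval : (2*a+b) * fib (w+6) + (a+b) * fib (w+5) =
              a * fib (w+8) + b * fib (w+7) := by
            have := tdown (w+4) a b
            rw [show w+4+4 = w+8 by ring, show w+4+3 = w+7 by ring,
                show w+4+2 = w+6 by ring, show w+4+1 = w+5 by ring] at this
            omega
          rw [show w+2+6 = w+8 by ring, show w+2+5 = w+7 by ring, ← hval]
          exact hmem

end DownAux2

namespace DownAux2
open DownAux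

lemma succ_lemma (n : ℕ) (hn : n ∈ downSet) :
    ∃ j, (j = 1 ∨ j = 2 ∨ j = 3 ∨ j = 5) ∧ n + j ∈ downSet := by
  obtain ⟨h2, a, b, t, ht, hte, ha, hab, hb, heq⟩ := hn
  match t, ht, hte with
  | 3, _, hte => exact absurd hte (by rintro ⟨r, hr⟩; omega)
  | 5, _, hte => exact absurd hte (by rintro ⟨r, hr⟩; omega)
  | 2, _, _ =>
    have hf : fib 2 = 1 := by decide
    have : n = 2 := by rw [heq]; simp [hf] at hb ⊢; omega
    refine ⟨3, by omega, mem_downSet_of 4 1 1 (n+3) (by omega) ⟨2, rfl⟩ le_rfl le_rfl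
      (by decide) (by rw [this]; decide)⟩
  | 4, _, _ =>
    have hf4 : fib 4 = 3 := by decide
    have hf3 : fib 3 = 2 := by decide
    rw [hf4] at hb
    rw [show (4:ℕ)-1 = 3 from rfl, hf4, hf3] at heq
    by_cases hA : a + 2 ≤ b
    · exact ⟨1, by omega, mem_downSet_of 4 (a+1) (b-1) _ (by omega) ⟨2, rfl⟩ (by omega)
        (by omega) (by simp [hf4]; omega) (by simp [hf4, hf3]; omega)⟩
    · by_cases hC : b = a + 1
      · exact ⟨3, by omega, mem_downSet_of 4 (a+1) b _ (by omega) ⟨2, rfl⟩ (by omega)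
          (by omega) (by simp [hf4]; omega) (by simp [hf4, hf3]; omega)⟩
      · -- b = a
        have hba : b = a := by omega
        by_cases ha2 : a ≤ 2
        · exact ⟨2, by omega, mem_downSet_of 4 a (b+1) _ (by omega) ⟨2, rfl⟩ (by omega)
            (by omega) (by simp [hf4]; omega) (by simp [hf4, hf3]; omega)⟩
        · -- a = b = 3, n = 15
          have : n = 15 := by omega
          exact ⟨3, by omega, mem_downSet_of 6 1 2 _ (by omega) ⟨3, rfl⟩ le_rfl (by omega)
            (by decide) (by rw [this]; decide)⟩
  | (v+6), _, hte =>
    have hv : Even v := by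
      rcases hte with ⟨r, hr⟩; exact ⟨r-3, by omega⟩
    obtain ⟨j, hj, hmem⟩ := reg_succ v hv a b ha (le_trans ha hab) (by omega) hb
    refine ⟨j, by omega, ?_⟩
    rw [show v+6-1 = v+5 from rfl] at heq
    rw [heq]
    exact hmem

end DownAux2

namespace DownAux3
open DownAux

lemma td_pos : ∀ (m c d : ℕ), 1 ≤ c → 1 ≤ d → ∀ k, ∃ C D, 1 ≤ C ∧ 1 ≤ D ∧
    C * fib (k+2) + D * fib (k+1) = c * fib (k+2+2*m) + d * fib (k+1+2*m) := by
  intro m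
  induction m with
  | zero => intro c d hc hd k; exact ⟨c, d, hc, hd, by norm_num⟩
  | succ m ihm =>
    intro c d hc hd k
    obtain ⟨C, D, hC, hD, hval⟩ := ihm c d hc hd (k+2)
    refine ⟨2*C+D, C+D, by omega, by omega, ?_⟩
    have ht := tdown k C D
    rw [show k+2+2 = k+4 by ring, show k+1+2 = k+3 by ring] at hval
    rw [show k+2+2*(m+1) = k+4+2*m by ring, show k+1+2*(m+1) = k+3+2*m by ring]
    omega

lemma td2 : ∀ (m a b : ℕ), 1 ≤ a → a ≤ b → ∀ k, ∃ A B,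
    (A * fib (k+2) + B * fib (k+1) = a * fib (k+2+2*(m+1)) + b * fib (k+1+2*(m+1))) ∧
    B + 1 ≤ A ∧ 2 ≤ B ∧ 3*A ≤ 5*B ∧ A ≤ 2*B := by
  intro m
  induction m with
  | zero =>
    intro a b ha hab k
    refine ⟨2*a+b, a+b, ?_, by omega, by omega, by omega, by omega⟩
    have ht := tdown k a b
    rw [show k+2+2*1 = k+4 by ring, show k+1+2*1 = k+3 by ring]
    omega
  | succ m ihm =>
    intro a b ha hab k
    obtain ⟨A, B, hval, h1, h2, h3, h4⟩ := ihm a b ha hab (k+2)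
    refine ⟨2*A+B, A+B, ?_, by omega, by omega, by omega, by omega⟩
    have ht := tdown k A B
    rw [show k+2+2 = k+4 by ring, show k+2+1 = k+3 by ring,
        show k+2+2+2*(m+1) = k+2+2*(m+1+1) by ring,
        show k+2+1+2*(m+1) = k+1+2*(m+1+1) by ring] at hval
    omega

lemma kappa_ex (v C D a b : ℕ) (hv : Even v)
    (heq : C * fib (v+6) + D * fib (v+5) = a * fib (v+6) + b * fib (v+5) + 4) :
    ∃ κ : ℤ, (C:ℤ) = a + 4 * fib (v+3) + fib (v+5) * κ ∧
      (D:ℤ) = b - 4 * fib (v+4) - fib (v+6) * κ := by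
  have hz : (C:ℤ) * fib (v+6) + D * fib (v+5) = a * fib (v+6) + b * fib (v+5) + 4 := by
    exact_mod_cast heq
  have hida := idA v hv
  have key : ((C:ℤ) - a - 4 * fib (v+3)) * fib (v+6) =
      ((b:ℤ) - 4 * fib (v+4) - D) * fib (v+5) := by
    linear_combination hz - 4 * hida
  have hg5pos : (0:ℤ) < fib (v+5) := by exact_mod_cast fib_pos.mpr (by omega)
  have hcop : IsCoprime (fib (v+5) : ℤ) (fib (v+6) : ℤ) := by
    rw [Int.isCoprime_iff_gcd_eq_one, Int.gcd_natCast_natCast]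
    exact fib_coprime_fib_succ (v+5)
  have hdvd : (fib (v+5) : ℤ) ∣ ((C:ℤ) - a - 4 * fib (v+3)) * fib (v+6) :=
    ⟨(b:ℤ) - 4 * fib (v+4) - D, by linarith [key]⟩
  have hdvd2 : (fib (v+5) : ℤ) ∣ ((C:ℤ) - a - 4 * fib (v+3)) :=
    hcop.dvd_of_dvd_mul_right hdvd
  obtain ⟨κ, hκ⟩ := hdvd2
  refine ⟨κ, by linarith [hκ], ?_⟩
  have h2 : (fib (v+5):ℤ) * (κ * fib (v+6)) = (fib (v+5):ℤ) * ((b:ℤ) - 4 * fib (v+4) - D) := by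
    rw [hκ] at key; ring_nf; ring_nf at key; linarith [key]
  have := mul_left_cancel₀ (ne_of_gt hg5pos) h2
  linarith [this]

end DownAux3

namespace DownAux4
open DownAux DownAux3

set_option maxHeartbeats 1000000 in
lemma nogap4 (n : ℕ) (h0 : n ∈ downSet) (h4 : n + 4 ∈ downSet) :
    n + 1 ∈ downSet ∨ n + 2 ∈ downSet ∨ n + 3 ∈ downSet := by
  obtain ⟨hn2, a, b, t, ht, hte, ha, hab, hb, heq⟩ := h0
  match t, ht, hte with
  | 3, _, hte => exact absurd hte (by rintro ⟨r, hr⟩; omega)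
  | 5, _, hte => exact absurd hte (by rintro ⟨r, hr⟩; omega)
  | 2, _, _ =>
    have hf : fib 2 = 1 := by decide
    have hn : n = 2 := by rw [heq]; simp [hf] at hb ⊢; omega
    exact Or.inr (Or.inr (mem_downSet_of 4 1 1 (n+3) (by omega) ⟨2, rfl⟩ le_rfl le_rfl
      (by decide) (by rw [hn]; decide)))
  | 4, _, _ =>
    have hf4 : fib 4 = 3 := by decide
    have hf3 : fib 3 = 2 := by decide
    rw [hf4] at hb
    rw [show (4:ℕ)-1 = 3 from rfl, hf4, hf3] at heq
    by_cases hA : a + 2 ≤ b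
    · exact Or.inl (mem_downSet_of 4 (a+1) (b-1) _ (by omega) ⟨2, rfl⟩ (by omega)
        (by omega) (by simp [hf4]; omega) (by simp [hf4, hf3]; omega))
    · by_cases hC : b = a + 1
      · exact Or.inr (Or.inr (mem_downSet_of 4 (a+1) b _ (by omega) ⟨2, rfl⟩ (by omega)
          (by omega) (by simp [hf4]; omega) (by simp [hf4, hf3]; omega)))
      · by_cases ha2 : a ≤ 2
        · exact Or.inr (Or.inl (mem_downSet_of 4 a (b+1) _ (by omega) ⟨2, rfl⟩ (by omega)
            (by omega) (by simp [hf4]; omega) (by simp [hf4, hf3]; omega)))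
        · have hn : n = 15 := by omega
          exact Or.inr (Or.inr (mem_downSet_of 6 1 2 _ (by omega) ⟨3, rfl⟩ le_rfl (by omega)
            (by decide) (by rw [hn]; decide)))
  | (v+6), _, hte =>
    have hv : Even v := by rcases hte with ⟨r, hr⟩; exact ⟨r-3, by omega⟩
    rw [show v+6-1 = v+5 from rfl] at heq
    have hg2 : fib (v+2) = fib v + fib (v+1) := fib_add_two
    have hg3 : fib (v+3) = fib (v+1) + fib (v+2) := fib_add_two
    have hg4 : fib (v+4) = fib (v+2) + fib (v+3) := fib_add_two
    have hg5 : fib (v+5) = fib (v+3) + fib (v+4) := fib_add_two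
    have hg6 : fib (v+6) = fib (v+4) + fib (v+5) := fib_add_two
    have hg7 : fib (v+7) = fib (v+5) + fib (v+6) := fib_add_two
    have hg8 : fib (v+8) = fib (v+6) + fib (v+7) := fib_add_two
    have hmono : fib v ≤ fib (v+1) := fib_mono (by omega)
    have hy : 1 ≤ fib (v+1) := fib_pos.mpr (by omega)
    have hv6 : Even (v+6) := hte
    have hv8 : Even (v+8) := by rcases hv with ⟨r, rfl⟩; exact ⟨r+4, by ring⟩
    by_cases hA : a + fib (v+5) ≤ b
    · refine Or.inl (mem_downSet_of (v+6) (a + fib (v+3)) (b - fib (v+4)) _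
        (by omega) hv6 (by omega) (by omega) (by omega) ?_)
      have hid := idA v hv
      have hb4 : fib (v+4) ≤ b := by omega
      rw [heq]
      zify [hb4]; push_cast
      linear_combination -hid
    · by_cases hC : a + fib (v+3) ≤ b
      · refine Or.inr (Or.inr (mem_downSet_of (v+6) (a + fib (v+1)) (b - fib (v+2)) _
          (by omega) hv6 (by omega) (by omega) (by omega) ?_))
        have hid := idC v hv
        have hb2 : fib (v+2) ≤ b := by omega
        rw [heq]
        zify [hb2]; push_cast
        linear_combination -hid
      · by_cases hD : 2*a + fib (v+5) ≤ 3*b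
        · refine Or.inr (Or.inr (mem_downSet_of (v+8) (a + fib (v+3) - b)
            (2*b - (a + fib (v+4))) _ (by omega) hv8 (by omega) (by omega) (by omega) ?_))
          have hid := idD v hv
          have h1 : b ≤ a + fib (v+3) := by omega
          have h2 : a + fib (v+4) ≤ 2*b := by omega
          have z7 : (fib (v+7) : ℤ) = fib (v+5) + fib (v+6) := by push_cast [hg7]; ring
          have z8 : (fib (v+8) : ℤ) = fib (v+6) + fib (v+7) := by push_cast [hg8]; ring
          rw [heq]
          zify [h1, h2]; push_cast
          linear_combination -hid + ((b:ℤ) - a) * z8 - (b:ℤ) * z7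
        · by_cases hB : fib (v+2) + 1 ≤ a
          · refine Or.inr (Or.inl (mem_downSet_of (v+6) (a - fib (v+2)) (b + fib (v+3)) _
              (by omega) hv6 (by omega) (by omega) (by omega) ?_))
            have hid := idB v hv
            have h1 : fib (v+2) ≤ a := by omega
            rw [heq]
            zify [h1]; push_cast
            linear_combination -hid
          · -- corner
            obtain ⟨hm2, c, d, u, hu, hue, hc, hcd, hd, heq4⟩ := h4
            have hf6 : fib 6 = 8 := by decide
            have hf5 : fib 5 = 5 := by decide
            have h6' : fib 6 ≤ fib (v+6) := fib_mono (by omega)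
            have h5' : fib 5 ≤ fib (v+5) := fib_mono (by omega)
            have hag : fib (v+6) ≤ a * fib (v+6) := Nat.le_mul_of_pos_left _ (by omega)
            have hbg : fib (v+5) ≤ b * fib (v+5) := Nat.le_mul_of_pos_left _ (by omega)
            have hn13 : 13 ≤ n := by omega
            match u, hu, hue with
            | 3, _, hue => exact absurd hue (by rintro ⟨r, hr⟩; omega)
            | 5, _, hue => exact absurd hue (by rintro ⟨r, hr⟩; omega)
            | 2, _, _ =>
              exfalso
              rw [show (2:ℕ)-1 = 1 from rfl] at heq4
              have e1 : fib 2 = 1 := by decide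
              have e2 : fib 1 = 1 := by decide
              rw [e1] at heq4 hd
              rw [e2] at heq4
              omega
            | 4, _, _ =>
              exfalso
              rw [show (4:ℕ)-1 = 3 from rfl] at heq4
              have e1 : fib 4 = 3 := by decide
              have e2 : fib 3 = 2 := by decide
              rw [e1] at heq4 hd
              rw [e2] at heq4
              omega
            | (w+6), _, hue =>
              have hw : Even w := by rcases hue with ⟨r, hr⟩; exact ⟨r-3, by omega⟩
              rw [show w+6-1 = w+5 from rfl] at heq4
              rcases le_or_gt v w with hvw | hwv
              · -- u ≥ s : contradiction
                exfalso
                obtain ⟨m, rfl⟩ : ∃ m, w = v + 2*m := by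
                  obtain ⟨p, hp⟩ := hv; obtain ⟨q, hq⟩ := hw
                  exact ⟨q - p, by omega⟩
                obtain ⟨C, D, hC1, hD1, hval⟩ := td_pos m c d hc (le_trans hc hcd) (v+4)
                rw [show v+4+2 = v+6 by ring, show v+4+1 = v+5 by ring,
                    show v+4+2+2*m = v+2*m+6 by ring, show v+4+1+2*m = v+2*m+5 by ring] at hval
                have heqC : C * fib (v+6) + D * fib (v+5) = a * fib (v+6) + b * fib (v+5) + 4 := by
                  rw [hval, ← heq4, heq]
                obtain ⟨κ, hCk, hDk⟩ := kappa_ex v C D a b hv heqC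
                have Za : (a:ℤ) ≤ fib (v+2) := by exact_mod_cast by omega
                have Zb : (b:ℤ) + 1 ≤ a + fib (v+3) := by exact_mod_cast by omega
                have Zab : (a:ℤ) ≤ b := by exact_mod_cast hab
                have Zbb : (b:ℤ) ≤ fib (v+6) := by exact_mod_cast hb
                have Z2 : (fib (v+2):ℤ) = fib v + fib (v+1) := by exact_mod_cast hg2
                have Z3 : (fib (v+3):ℤ) = fib (v+1) + fib (v+2) := by exact_mod_cast hg3
                have Z4 : (fib (v+4):ℤ) = fib (v+2) + fib (v+3) := by exact_mod_cast hg4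
                have Z5 : (fib (v+5):ℤ) = fib (v+3) + fib (v+4) := by exact_mod_cast hg5
                have Z6 : (fib (v+6):ℤ) = fib (v+4) + fib (v+5) := by exact_mod_cast hg6
                have Zm : (fib v:ℤ) ≤ fib (v+1) := by exact_mod_cast hmono
                have Zy : (1:ℤ) ≤ fib (v+1) := by exact_mod_cast hy
                have Z0 : (0:ℤ) ≤ fib v := by positivity
                have ZC : (1:ℤ) ≤ C := by exact_mod_cast hC1
                have ZD : (1:ℤ) ≤ D := by exact_mod_cast hD1
                rcases lt_trichotomy κ 0 with hk | hk | hk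
                · rcases lt_or_ge κ (-1) with hk2 | hk2
                  · -- κ ≤ -2
                    have hmul : (fib (v+5):ℤ) * κ ≤ (fib (v+5):ℤ) * (-2) :=
                      mul_le_mul_of_nonneg_left (by omega) (by positivity)
                    linarith
                  · -- κ = -1
                    have hk1 : κ = -1 := by omega
                    rw [hk1] at hDk
                    linarith
                · rw [hk] at hDk; linarith
                · -- κ ≥ 1
                  have hmul : (fib (v+6):ℤ) * 1 ≤ (fib (v+6):ℤ) * κ :=
                    mul_le_mul_of_nonneg_left (by omega) (by positivity)
                  linarith
              · -- u < s
                obtain ⟨m, rfl⟩ : ∃ m, v = w + 2*(m+1) := by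
                  obtain ⟨p, hp⟩ := hv; obtain ⟨q, hq⟩ := hw
                  exact ⟨p - q - 1, by omega⟩
                obtain ⟨A, B, hval, hAB, hB2, h3A, hA2⟩ := td2 m a b ha hab (w+4)
                rw [show w+4+2 = w+6 by ring, show w+4+1 = w+5 by ring,
                    show w+4+2+2*(m+1) = w+2*(m+1)+6 by ring,
                    show w+4+1+2*(m+1) = w+2*(m+1)+5 by ring] at hval
                have heqC : c * fib (w+6) + d * fib (w+5) = A * fib (w+6) + B * fib (w+5) + 4 := by
                  rw [hval, ← heq, ← heq4]
                obtain ⟨κ, hck, hdk⟩ := kappa_ex w c d A B hw heqC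
                have hh2 : fib (w+2) = fib w + fib (w+1) := fib_add_two
                have hh3 : fib (w+3) = fib (w+1) + fib (w+2) := fib_add_two
                have hh4 : fib (w+4) = fib (w+2) + fib (w+3) := fib_add_two
                have hh5 : fib (w+5) = fib (w+3) + fib (w+4) := fib_add_two
                have hh6 : fib (w+6) = fib (w+4) + fib (w+5) := fib_add_two
                have Z2 : (fib (w+2):ℤ) = fib w + fib (w+1) := by exact_mod_cast hh2
                have Z3 : (fib (w+3):ℤ) = fib (w+1) + fib (w+2) := by exact_mod_cast hh3
                have Z4 : (fib (w+4):ℤ) = fib (w+2) + fib (w+3) := by exact_mod_cast hh4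
                have Z5 : (fib (w+5):ℤ) = fib (w+3) + fib (w+4) := by exact_mod_cast hh5
                have Z6 : (fib (w+6):ℤ) = fib (w+4) + fib (w+5) := by exact_mod_cast hh6
                have Zmw : (fib (w+2):ℤ) ≤ fib (w+3) := by
                  exact_mod_cast fib_mono (by omega : w+2 ≤ w+3)
                have Zyw : (1:ℤ) ≤ fib (w+1) := by exact_mod_cast fib_pos.mpr (by omega)
                have Z0w : (0:ℤ) ≤ fib w := by positivity
                have Zc : (1:ℤ) ≤ c := by exact_mod_cast hc
                have Zcd : (c:ℤ) ≤ d := by exact_mod_cast hcd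
                have Zd6 : (d:ℤ) ≤ fib (w+6) := by exact_mod_cast hd
                have ZAB : (B:ℤ) + 1 ≤ A := by exact_mod_cast hAB
                have ZB2 : (2:ℤ) ≤ B := by exact_mod_cast hB2
                have Z3A : 3*(A:ℤ) ≤ 5*B := by exact_mod_cast h3A
                rcases lt_trichotomy κ (-2) with hk | hk | hk
                · -- κ ≤ -3
                  exfalso
                  have hmul : (fib (w+6):ℤ) * κ ≤ (fib (w+6):ℤ) * (-3) :=
                    mul_le_mul_of_nonneg_left (by omega) (by positivity)
                  linarith
                · -- κ = -2
                  rw [hk] at hck hdk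
                  by_cases hmid : A ≤ B + fib (w+4)
                  · -- middle n+2
                    have Zmid : (A:ℤ) ≤ B + fib (w+4) := by exact_mod_cast hmid
                    have hd3 : fib (w+3) ≤ d := by
                      have : (fib (w+3):ℤ) ≤ d := by linarith
                      exact_mod_cast this
                    have hord : c + fib (w+2) + fib (w+3) ≤ d := by
                      have : (c:ℤ) + fib (w+2) + fib (w+3) ≤ d := by linarith
                      exact_mod_cast this
                    refine Or.inr (Or.inl (mem_downSet_of (w+6) (c + fib (w+2))
                      (d - fib (w+3)) _ (by omega) hue (by omega) (by omega) (by omega) ?_))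
                    have hid := idB w hw
                    have zheq4 : (n:ℤ) + 4 = c * fib (w+6) + d * fib (w+5) := by
                      exact_mod_cast heq4
                    zify [hd3]; push_cast
                    linear_combination zheq4 + hid
                  · exfalso
                    have Zmid : (B:ℤ) + fib (w+4) + 1 ≤ A := by
                      exact_mod_cast (by omega : B + fib (w+4) + 1 ≤ A)
                    linarith
                · -- κ ≥ -1
                  exfalso
                  rcases lt_trichotomy κ 0 with hk2 | hk2 | hk2
                  · -- κ = -1
                    have hk1 : κ = -1 := by omega
                    rw [hk1] at hck hdk
                    linarith
                  · rw [hk2] at hck hdk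
                    linarith
                  · have hmul : (fib (w+5):ℤ) * 1 ≤ (fib (w+5):ℤ) * κ :=
                      mul_le_mul_of_nonneg_left (by omega) (by positivity)
                    linarith

end DownAux4

namespace DownAux5
open DownAux

lemma small_mem (n : ℕ) (h : n ∈ downSet) (hn : n ≤ 22) :
    n = 2 ∨ n = 5 ∨ n = 7 ∨ n = 9 ∨ n = 10 ∨ n = 12 ∨ n = 13 ∨ n = 15 ∨ n = 18 := by
  obtain ⟨h2, a, b, t, ht, hte, ha, hab, hb, heq⟩ := h
  have e : t - 1 + 2 = t + 1 := by omega
  have e2 : t - 1 + 1 = t := by omega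
  have hf : fib (t+1) = fib (t-1) + fib t := by rw [← e, fib_add_two, e2]
  have hag : fib t ≤ a * fib t := Nat.le_mul_of_pos_left _ (by omega)
  have hbg : fib (t-1) ≤ b * fib (t-1) := Nat.le_mul_of_pos_left _ (by omega)
  have hub : fib (t+1) ≤ n := by omega
  have ht7 : t ≤ 7 := by
    by_contra hcon
    have h1 : fib 9 ≤ fib (t+1) := fib_mono (by omega)
    have h2 : fib 9 = 34 := by decide
    omega
  have hmod : t % 2 = 0 := Nat.even_iff.mp hte
  have f1 : fib 1 = 1 := by decide
  have f2 : fib 2 = 1 := by decide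
  have f3 : fib 3 = 2 := by decide
  have f4 : fib 4 = 3 := by decide
  have f5 : fib 5 = 5 := by decide
  have f6 : fib 6 = 8 := by decide
  interval_cases t
  · rw [show (2:ℕ)-1 = 1 from rfl, f1, f2] at heq; rw [f2] at hb; omega
  · omega
  · rw [show (4:ℕ)-1 = 3 from rfl, f3, f4] at heq; rw [f4] at hb; omega
  · omega
  · rw [show (6:ℕ)-1 = 5 from rfl, f5, f6] at heq; rw [f6] at hb
    have ha8 : a ≤ 8 := by omega
    interval_cases a <;> omega
  · omega

lemma mem2 : (2:ℕ) ∈ downSet :=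
  mem_downSet_of 2 1 1 2 le_rfl ⟨1, rfl⟩ le_rfl le_rfl (by decide) (by decide)
lemma mem5 : (5:ℕ) ∈ downSet :=
  mem_downSet_of 4 1 1 5 (by omega) ⟨2, rfl⟩ le_rfl le_rfl (by decide) (by decide)
lemma mem7 : (7:ℕ) ∈ downSet :=
  mem_downSet_of 4 1 2 7 (by omega) ⟨2, rfl⟩ le_rfl (by omega) (by decide) (by decide)
lemma mem9 : (9:ℕ) ∈ downSet :=
  mem_downSet_of 4 1 3 9 (by omega) ⟨2, rfl⟩ le_rfl (by omega) (by decide) (by decide)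
lemma mem10 : (10:ℕ) ∈ downSet :=
  mem_downSet_of 4 2 2 10 (by omega) ⟨2, rfl⟩ (by omega) le_rfl (by decide) (by decide)
lemma mem18 : (18:ℕ) ∈ downSet :=
  mem_downSet_of 6 1 2 18 (by omega) ⟨3, rfl⟩ le_rfl (by omega) (by decide) (by decide)
lemma mem23 : (23:ℕ) ∈ downSet :=
  mem_downSet_of 6 1 3 23 (by omega) ⟨3, rfl⟩ le_rfl (by omega) (by decide) (by decide)

end DownAux5

theorem stmt16 (d : ℕ → ℕ) (hmono : StrictMono d) (hrange : Set.range d = downSet) :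
    {m : ℕ | ∃ k : ℕ, d (k + 1) - d k = m} = {1, 2, 3, 5} := by
  have hmemD : ∀ k, d k ∈ downSet := fun k => hrange ▸ Set.mem_range_self k
  have hsurj : ∀ x ∈ downSet, ∃ k, d k = x := fun x hx => by
    rw [← hrange] at hx; exact hx
  ext m
  simp only [Set.mem_setOf_eq, Set.mem_insert_iff, Set.mem_singleton_iff]
  constructor
  · rintro ⟨k, rfl⟩
    have h1 : d k < d (k+1) := hmono (by omega)
    obtain ⟨j, hj, hmem⟩ := DownAux2.succ_lemma (d k) (hmemD k)
    obtain ⟨i, hi⟩ := hsurj _ hmem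
    have hik : k < i := hmono.lt_iff_lt.mp (by omega)
    have hle : d (k+1) ≤ d k + j := by
      have := hmono.monotone (show k+1 ≤ i by omega)
      omega
    have hne4 : d (k+1) - d k ≠ 4 := by
      intro hg4
      have h4mem : d k + 4 ∈ downSet := by
        have he : d (k+1) = d k + 4 := by omega
        rw [← he]; exact hmemD (k+1)
      rcases DownAux4.nogap4 (d k) (hmemD k) h4mem with hmid | hmid | hmid <;>
      · obtain ⟨l, hl⟩ := hsurj _ hmid
        have hkl : k < l := hmono.lt_iff_lt.mp (by omega)
        have hlk : l < k+1 := hmono.lt_iff_lt.mp (by omega)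
        omega
    omega
  · intro hm
    have key : ∀ x y : ℕ, x ∈ downSet → y ∈ downSet → x < y →
        (∀ z, x < z → z < y → z ∉ downSet) → ∃ k, d (k+1) - d k = y - x := by
      intro x y hx hy hxy hbetween
      obtain ⟨k, hk⟩ := hsurj x hx
      obtain ⟨l, hl⟩ := hsurj y hy
      have hkl : k < l := hmono.lt_iff_lt.mp (by omega)
      have hd1 : d (k+1) ≤ y := by
        have := hmono.monotone (show k+1 ≤ l by omega)
        omega
      have hd2 : x < d (k+1) := by
        have := hmono (show k < k+1 by omega)
        omega
      have hd3 : d (k+1) = y := by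
        by_contra hne
        exact hbetween _ hd2 (by omega) (hmemD (k+1))
      exact ⟨k, by omega⟩
    rcases hm with rfl | rfl | rfl | rfl
    · obtain ⟨k, hk⟩ := key 9 10 DownAux5.mem9 DownAux5.mem10 (by omega)
        (fun z h1 h2 _ => by omega)
      exact ⟨k, by omega⟩
    · obtain ⟨k, hk⟩ := key 5 7 DownAux5.mem5 DownAux5.mem7 (by omega)
        (fun z h1 h2 hz => by
          rcases DownAux5.small_mem z hz (by omega) with h|h|h|h|h|h|h|h|h <;> omega)
      exact ⟨k, by omega⟩
    · obtain ⟨k, hk⟩ := key 2 5 DownAux5.mem2 DownAux5.mem5 (by omega)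
        (fun z h1 h2 hz => by
          rcases DownAux5.small_mem z hz (by omega) with h|h|h|h|h|h|h|h|h <;> omega)
      exact ⟨k, by omega⟩
    · obtain ⟨k, hk⟩ := key 18 23 DownAux5.mem18 DownAux5.mem23 (by omega)
        (fun z h1 h2 hz => by
          rcases DownAux5.small_mem z hz (by omega) with h|h|h|h|h|h|h|h|h <;> omega)
      exact ⟨k, by omega⟩
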